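/- If aᵢ ≥ a > 0 for all i, |a₁ − aᵢ| ≤ Ch for all i = 2,…,n, and wᵢ > 0 with Σwᵢ = 1, then |M_w − H_w| ≤ 4C²h²·(Σ_{i<j} wᵢwⱼ)/a ≤ 2C²h²/a, so the weighted arithmetic and harmonic means of n values differ by O(h²). -/

import Mathlib

open Finset

lemma sum_split_pairs {n : ℕ} (f : Fin n × Fin n → ℝ) :
    ∑ p : Fin n × Fin n, f p
      = ∑ p ∈ univ.filter (fun p : Fin n × Fin n => p.1 < p.2), f p
        + ∑ p ∈ univ.filter (fun p : Fin n × Fin n => p.1 < p.2), f p.swap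
        + ∑ p ∈ univ.filter (fun p : Fin n × Fin n => p.1 = p.2), f p := by
  have hswap : ∑ p ∈ univ.filter (fun p : Fin n × Fin n => p.1 < p.2), f p.swap
      = ∑ p ∈ univ.filter (fun p : Fin n × Fin n => p.2 < p.1), f p := by
    refine Finset.sum_nbij' Prod.swap Prod.swap ?_ ?_ ?_ ?_ ?_ <;>
      simp [Finset.mem_filter]
  rw [hswap]
  have h1 := Finset.sum_filter_add_sum_filter_not Finset.univ
    (fun p : Fin n × Fin n => p.1 < p.2) f
  have h2 : Finset.univ.filter (fun p : Fin n × Fin n => ¬ p.1 < p.2)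
      = Finset.univ.filter (fun p : Fin n × Fin n => p.2 < p.1)
        ∪ Finset.univ.filter (fun p : Fin n × Fin n => p.1 = p.2) := by
    ext p
    simp only [Finset.mem_filter, Finset.mem_union, Finset.mem_univ, true_and]
    constructor
    · intro hp
      rcases lt_or_eq_of_le (not_lt.mp hp) with h | h
      · exact Or.inl h
      · exact Or.inr h.symm
    · rintro (h | h)
      · exact not_lt.mpr h.le
      · exact not_lt.mpr h.ge
  have hdisj : Disjoint (Finset.univ.filter (fun p : Fin n × Fin n => p.2 < p.1))
      (Finset.univ.filter (fun p : Fin n × Fin n => p.1 = p.2)) := by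
    rw [Finset.disjoint_filter]
    intro p _ hp hp2
    exact absurd hp2 hp.ne'
  rw [← h1, h2, Finset.sum_union hdisj]
  ring

lemma key_real (α c x y : ℝ) (hα : 0 < α) (hx : α ≤ x) (hy : α ≤ y) (hc : 0 < c)
    (hxy : |x - y| ≤ 2 * c) :
    α * ((x - y) ^ 2 * (min x y + 2 * c)) ≤ 4 * c ^ 2 * (x * y) := by
  rcases le_total x y with hle | hle
  · rw [min_eq_left hle]
    have hx0 : (0:ℝ) ≤ x := hα.le.trans hx
    have hd0 : 0 ≤ y - x := by linarith
    have hd : y - x ≤ 2 * c := by rw [abs_sub_comm] at hxy; rwa [abs_of_nonneg hd0] at hxy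
    have h1 : α * ((x - y) ^ 2 * (x + 2 * c)) ≤ x * ((x - y) ^ 2 * (x + 2 * c)) :=
      mul_le_mul_of_nonneg_right hx (mul_nonneg (sq_nonneg _) (by linarith))
    have h2 : (x - y) ^ 2 ≤ 4 * c ^ 2 := by nlinarith
    have h3 : 2 * c * (x - y) ^ 2 ≤ 4 * c ^ 2 * (y - x) := by
      nlinarith [mul_nonneg (mul_nonneg (sub_nonneg.mpr hd) hd0) hc.le]
    nlinarith [mul_le_mul_of_nonneg_left h2 (sq_nonneg x),
      mul_le_mul_of_nonneg_left h3 hx0]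
  · rw [min_eq_right hle]
    have hy0 : (0:ℝ) ≤ y := hα.le.trans hy
    have hd0 : 0 ≤ x - y := by linarith
    have hd : x - y ≤ 2 * c := by rwa [abs_of_nonneg hd0] at hxy
    have h1 : α * ((x - y) ^ 2 * (y + 2 * c)) ≤ y * ((x - y) ^ 2 * (y + 2 * c)) :=
      mul_le_mul_of_nonneg_right hy (mul_nonneg (sq_nonneg _) (by linarith))
    have h2 : (x - y) ^ 2 ≤ 4 * c ^ 2 := by nlinarith
    have h3 : 2 * c * (x - y) ^ 2 ≤ 4 * c ^ 2 * (x - y) := by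
      nlinarith [mul_nonneg (mul_nonneg (sub_nonneg.mpr hd) hd0) hc.le]
    nlinarith [mul_le_mul_of_nonneg_left h2 (sq_nonneg y),
      mul_le_mul_of_nonneg_left h3 hy0]

theorem weighted_AM_HM_close_n (n : ℕ) (hn : 2 ≤ n)
    (a w : Fin n → ℝ) (α C h : ℝ)
    (hα : 0 < α) (ha : ∀ i, α ≤ a i)
    (hw : ∀ i, 0 < w i) (hsum : ∑ i, w i = 1)
    (hC : 0 < C) (hh : 0 < h)
    (hdiff : ∀ i, |a ⟨0, by omega⟩ - a i| ≤ C * h) :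
    |(∑ i, w i * a i) - (∑ i, w i / a i)⁻¹|
      ≤ 4 * C ^ 2 * h ^ 2
          * (∑ p ∈ Finset.univ.filter (fun p : Fin n × Fin n => p.1 < p.2),
              w p.1 * w p.2) / α ∧
    4 * C ^ 2 * h ^ 2
      * (∑ p ∈ Finset.univ.filter (fun p : Fin n × Fin n => p.1 < p.2),
          w p.1 * w p.2) / α
      ≤ 2 * C ^ 2 * h ^ 2 / α := by
  have ha0 : ∀ i, 0 < a i := fun i => hα.trans_le (ha i)
  set c : ℝ := C * h with hc_def
  have hc : 0 < c := mul_pos hC hh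
  have hn0 : 0 < n := by omega
  set i0 : Fin n := ⟨0, hn0⟩ with hi0
  have hdiff' : ∀ i, |a i0 - a i| ≤ c := fun i => hdiff i
  have hub : ∀ i k : Fin n, a k ≤ a i + 2 * c := by
    intro i k
    have h1 := abs_le.mp (hdiff' k)
    have h2 := abs_le.mp (hdiff' i)
    linarith [h1.1, h2.2]
  have habs : ∀ i j : Fin n, |a i - a j| ≤ 2 * c := by
    intro i j
    have h1 := abs_sub_le (a i) (a i0) (a j)
    rw [abs_sub_comm (a i) (a i0)] at h1
    linarith [hdiff' i, hdiff' j]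
  set S := ∑ i, w i / a i with hSdef
  have hSpos : 0 < S :=
    Finset.sum_pos (fun i _ => div_pos (hw i) (ha0 i)) ⟨i0, Finset.mem_univ _⟩
  set P := ∑ p ∈ Finset.univ.filter (fun p : Fin n × Fin n => p.1 < p.2),
      w p.1 * w p.2 with hPdef
  have hSlb : ∀ i j : Fin n, 1 / (min (a i) (a j) + 2 * c) ≤ S := by
    intro i j
    have hm0 : 0 < min (a i) (a j) + 2 * c := by
      have := lt_min (ha0 i) (ha0 j); linarith
    have hstep : ∀ k ∈ Finset.univ, w k / (min (a i) (a j) + 2 * c) ≤ w k / a k := by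
      intro k _
      have hk : a k ≤ min (a i) (a j) + 2 * c := by
        rcases le_total (a i) (a j) with hle | hle
        · rw [min_eq_left hle]; exact hub i k
        · rw [min_eq_right hle]; exact hub j k
      exact div_le_div_of_nonneg_left (hw k).le (ha0 k) hk
    calc 1 / (min (a i) (a j) + 2 * c)
        = (∑ k, w k) / (min (a i) (a j) + 2 * c) := by rw [hsum]
      _ = ∑ k, w k / (min (a i) (a j) + 2 * c) := Finset.sum_div _ _ _
      _ ≤ ∑ k, w k / a k := Finset.sum_le_sum hstep
  have hpair : ∀ i j : Fin n,
      (a i - a j) ^ 2 / (a i * a j) ≤ 4 * c ^ 2 / α * S := by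
    intro i j
    have hm0 : 0 < min (a i) (a j) + 2 * c := by
      have := lt_min (ha0 i) (ha0 j); linarith
    have hk := key_real α c (a i) (a j) hα (ha i) (ha j) hc (habs i j)
    have haij : 0 < a i * a j := mul_pos (ha0 i) (ha0 j)
    have h1 : (a i - a j) ^ 2 * (min (a i) (a j) + 2 * c) / (a i * a j)
        ≤ 4 * c ^ 2 / α := by
      rw [div_le_div_iff₀ haij hα]
      nlinarith [hk]
    have h2 : (a i - a j) ^ 2 / (a i * a j)
        = ((a i - a j) ^ 2 * (min (a i) (a j) + 2 * c) / (a i * a j))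
            * (1 / (min (a i) (a j) + 2 * c)) := by
      field_simp
    rw [h2]
    have hnn : 0 ≤ (a i - a j) ^ 2 * (min (a i) (a j) + 2 * c) / (a i * a j) :=
      div_nonneg (mul_nonneg (sq_nonneg _) hm0.le) haij.le
    calc ((a i - a j) ^ 2 * (min (a i) (a j) + 2 * c) / (a i * a j))
          * (1 / (min (a i) (a j) + 2 * c))
        ≤ ((a i - a j) ^ 2 * (min (a i) (a j) + 2 * c) / (a i * a j)) * S :=
          mul_le_mul_of_nonneg_left (hSlb i j) hnn
      _ ≤ 4 * c ^ 2 / α * S := mul_le_mul_of_nonneg_right h1 hSpos.le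
  have hprod1 : (∑ i, w i * a i) * S
      = ∑ p : Fin n × Fin n, (w p.1 * a p.1) * (w p.2 / a p.2) := by
    rw [hSdef, Finset.sum_mul_sum, Fintype.sum_prod_type]
  have hone : (1:ℝ) = ∑ p : Fin n × Fin n, w p.1 * w p.2 := by
    calc (1:ℝ) = (∑ i, w i) * (∑ j, w j) := by rw [hsum]; norm_num
      _ = ∑ i, ∑ j, w i * w j := by rw [Finset.sum_mul_sum]
      _ = ∑ p : Fin n × Fin n, w p.1 * w p.2 := by rw [Fintype.sum_prod_type]
  have key : (∑ i, w i * a i) * S - 1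
      = ∑ p ∈ Finset.univ.filter (fun p : Fin n × Fin n => p.1 < p.2),
          w p.1 * w p.2 * ((a p.1 - a p.2) ^ 2 / (a p.1 * a p.2)) := by
    rw [hprod1]
    nth_rewrite 1 [hone]
    rw [← Finset.sum_sub_distrib]
    rw [sum_split_pairs (fun p : Fin n × Fin n =>
      (w p.1 * a p.1) * (w p.2 / a p.2) - w p.1 * w p.2)]
    have hdiag : ∑ p ∈ Finset.univ.filter (fun p : Fin n × Fin n => p.1 = p.2),
        ((w p.1 * a p.1) * (w p.2 / a p.2) - w p.1 * w p.2) = 0 := by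
      apply Finset.sum_eq_zero
      intro p hp
      have hp' : p.1 = p.2 := (Finset.mem_filter.mp hp).2
      rw [← hp']
      have hne : a p.1 ≠ 0 := (ha0 p.1).ne'
      field_simp
      ring
    rw [hdiag, add_zero, ← Finset.sum_add_distrib]
    apply Finset.sum_congr rfl
    intro p _
    simp only [Prod.fst_swap, Prod.snd_swap]
    have h1 : a p.1 ≠ 0 := (ha0 p.1).ne'
    have h2 : a p.2 ≠ 0 := (ha0 p.2).ne'
    field_simp
    ring
  have hkey_nonneg : 0 ≤ (∑ i, w i * a i) * S - 1 := by
    rw [key]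
    apply Finset.sum_nonneg
    intro p _
    exact mul_nonneg (mul_nonneg (hw _).le (hw _).le)
      (div_nonneg (sq_nonneg _) (mul_pos (ha0 _) (ha0 _)).le)
  have hkey_le : (∑ i, w i * a i) * S - 1 ≤ (4 * c ^ 2 / α * S) * P := by
    rw [key, hPdef, Finset.mul_sum]
    apply Finset.sum_le_sum
    intro p _
    calc w p.1 * w p.2 * ((a p.1 - a p.2) ^ 2 / (a p.1 * a p.2))
        ≤ w p.1 * w p.2 * (4 * c ^ 2 / α * S) :=
          mul_le_mul_of_nonneg_left (hpair p.1 p.2)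
            (mul_nonneg (hw _).le (hw _).le)
      _ = 4 * c ^ 2 / α * S * (w p.1 * w p.2) := by ring
  have hMH : (∑ i, w i * a i) - S⁻¹ = ((∑ i, w i * a i) * S - 1) / S := by
    field_simp
  constructor
  · rw [hMH, abs_of_nonneg (div_nonneg hkey_nonneg hSpos.le), div_le_iff₀ hSpos]
    calc (∑ i, w i * a i) * S - 1 ≤ (4 * c ^ 2 / α * S) * P := hkey_le
      _ = 4 * C ^ 2 * h ^ 2 * P / α * S := by rw [hc_def]; ring
  · have h2P : P + P ≤ 1 := by
      have hsplit := sum_split_pairs (fun p : Fin n × Fin n => w p.1 * w p.2)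
      have hswapeq : ∑ p ∈ Finset.univ.filter (fun p : Fin n × Fin n => p.1 < p.2),
          w p.swap.1 * w p.swap.2 = P := by
        rw [hPdef]
        apply Finset.sum_congr rfl
        intro p _
        simp [mul_comm]
      have hdnn : 0 ≤ ∑ p ∈ Finset.univ.filter (fun p : Fin n × Fin n => p.1 = p.2),
          w p.1 * w p.2 :=
        Finset.sum_nonneg fun p _ => mul_nonneg (hw _).le (hw _).le
      rw [hswapeq] at hsplit
      rw [hone]
      rw [hsplit, ← hPdef]
      linarith
    have hpos : (0:ℝ) < C ^ 2 * h ^ 2 := by positivity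
    rw [div_le_div_iff₀ hα hα]
    nlinarith [mul_le_mul_of_nonneg_left h2P (mul_pos hpos hα).le]
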